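/- Energy stability of the coupled dememorized system with convection for the permeability κ = κ₁₁ ã⊗ã. Let d be a positive integer and T > 0. Let ã, a : ℝᵈ → ℝᵈ be continuously differentiable divergence-free vector fields, let κ₁₁ : ℝᵈ → ℝ be continuously differentiable with κ₁₁(x) ≥ 0 for all x, and let β ≥ 0 satisfy β κ₁₁(x) + ã(x)·∇κ₁₁(x) ≥ 0 for all x ∈ ℝᵈ. Let u, v : ℝᵈ × [0,T] → ℝ be twice continuously differentiable and suppose there is a compact set K ⊂ ℝᵈ such that u(·,t) and v(·,t) vanish outside K for every t ∈ [0,T]. Assume u and v satisfy the coupled system: ∂ₜv(x,t) − ã(x)·∇v(x,t) + β v(x,t) = u(x,t) and ∂ₜu(x,t) + a(x)·∇u(x,t) = ∇·( κ₁₁(x) (ã(x)·∇v(x,t)) ã(x) ) for all (x,t) ∈ ℝᵈ × [0,T]. Then ∫_{ℝᵈ} u(x,T)² dx + ∫_{ℝᵈ} κ₁₁(x) (ã(x)·∇v(x,T))² dx ≤ ∫_{ℝᵈ} u(x,0)² dx + ∫_{ℝᵈ} κ₁₁(x) (ã(x)·∇v(x,0))² dx. -/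

import Mathlib

open RealInnerProductSpace MeasureTheory

section helpers2
open Set Function

section helpers
variable {d : ℕ}

local notation "Ed" => EuclideanSpace ℝ (Fin d)

lemma sum_single_smul (z : EuclideanSpace ℝ (Fin d)) :
    ∑ i, z i • EuclideanSpace.single i (1:ℝ) = z := by
  ext j
  simp only [PiLp.smul_apply, EuclideanSpace.single_apply, smul_eq_mul]
  rw [WithLp.ofLp_sum, Finset.sum_apply]
  simp [PiLp.smul_apply, EuclideanSpace.single_apply]

lemma div_smul_apply {g : Ed → ℝ} {A : Ed → Ed} {x : Ed}
    (hg : DifferentiableAt ℝ g x) (hA : DifferentiableAt ℝ A x)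
    (hdiv : ∑ i, fderiv ℝ A x (EuclideanSpace.single i 1) i = 0) :
    ∑ i, fderiv ℝ (fun y => g y • A y) x (EuclideanSpace.single i 1) i
      = fderiv ℝ g x (A x) := by
  have hsmul : ∀ i, fderiv ℝ (fun y => g y • A y) x (EuclideanSpace.single i 1)
      = fderiv ℝ g x (EuclideanSpace.single i 1) • A x
        + g x • fderiv ℝ A x (EuclideanSpace.single i 1) := by
    intro i
    rw [fderiv_fun_smul hg hA]
    simp [ContinuousLinearMap.add_apply, ContinuousLinearMap.smulRight_apply]
    module
  calc ∑ i, fderiv ℝ (fun y => g y • A y) x (EuclideanSpace.single i 1) i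
      = ∑ i, (fderiv ℝ g x (EuclideanSpace.single i 1) * A x i
          + g x * fderiv ℝ A x (EuclideanSpace.single i 1) i) := by
        refine Finset.sum_congr rfl fun i _ => ?_
        rw [hsmul i]
        simp
    _ = (∑ i, A x i * fderiv ℝ g x (EuclideanSpace.single i 1))
          + g x * ∑ i, fderiv ℝ A x (EuclideanSpace.single i 1) i := by
        rw [Finset.sum_add_distrib, Finset.mul_sum]
        congr 1
        exact Finset.sum_congr rfl fun i _ => mul_comm _ _
    _ = fderiv ℝ g x (A x) := by
        rw [hdiv, mul_zero, add_zero]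
        have : fderiv ℝ g x (A x) = fderiv ℝ g x (∑ i, (A x i) • EuclideanSpace.single i 1) := by
          rw [sum_single_smul]
        rw [this, map_sum]
        exact Finset.sum_congr rfl fun i _ => by
          rw [ContinuousLinearMap.map_smul]; simp

lemma integral_divergence_zero {d : ℕ} (hd : 0 < d)
    (F : EuclideanSpace ℝ (Fin d) → EuclideanSpace ℝ (Fin d))
    (hF : ContDiff ℝ 1 F) (hsupp : HasCompactSupport F) :
    ∫ x, ∑ i, fderiv ℝ F x (EuclideanSpace.single i 1) i = 0 := by
  obtain ⟨n, rfl⟩ : ∃ n, d = n + 1 := ⟨d - 1, (Nat.succ_pred_eq_of_pos hd).symm⟩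
  set eE := EuclideanSpace.equiv (Fin (n + 1)) ℝ with heE
  set G : (Fin (n + 1) → ℝ) → (Fin (n + 1) → ℝ) := fun y => eE (F (eE.symm y)) with hGdef
  have hGc : G = (⇑eE) ∘ F ∘ (⇑eE.symm) := rfl
  have hG : ContDiff ℝ 1 G := by
    rw [hGc]
    exact (eE.contDiff.comp hF).comp eE.symm.contDiff
  have hGsupp : HasCompactSupport G := by
    rw [hGc, ← Function.comp_assoc]
    exact (hsupp.comp_homeomorph eE.symm.toHomeomorph).comp_left (g := ⇑eE) (map_zero _)
  have hfd : ∀ y, fderiv ℝ G y =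
      (eE : EuclideanSpace ℝ (Fin (n+1)) →L[ℝ] (Fin (n+1) → ℝ)).comp
        ((fderiv ℝ F (eE.symm y)).comp
          (eE.symm : (Fin (n+1) → ℝ) →L[ℝ] EuclideanSpace ℝ (Fin (n+1)))) := by
    intro y
    rw [hGc, ContinuousLinearEquiv.comp_fderiv,
      ContinuousLinearEquiv.comp_right_fderiv]
  have hdivEq : ∀ y, (∑ i, fderiv ℝ G y (Pi.single i 1) i) =
      ∑ i, fderiv ℝ F (eE.symm y) (EuclideanSpace.single i 1) i := by
    intro y
    rw [hfd]
    congr 1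
  -- transfer the integral to the pi type
  have hMP : MeasurePreserving (MeasurableEquiv.toLp 2 (Fin (n+1) → ℝ)).symm volume volume :=
    EuclideanSpace.volume_preserving_symm_measurableEquiv_toLp _
  have htrans : ∫ x, ∑ i, fderiv ℝ F x (EuclideanSpace.single i 1) i
      = ∫ y, ∑ i, fderiv ℝ G y (Pi.single i 1) i := by
    rw [← hMP.integral_comp (MeasurableEquiv.toLp 2 (Fin (n+1) → ℝ)).symm.measurableEmbedding]
    refine integral_congr_ae (Filter.Eventually.of_forall fun x => ?_)
    exact (hdivEq ((MeasurableEquiv.toLp 2 (Fin (n+1) → ℝ)).symm x)).symm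
  rw [htrans]
  -- find a box containing the support
  obtain ⟨R, hR⟩ := hGsupp.isCompact.isBounded.subset_closedBall (0 : Fin (n+1) → ℝ)
  set M : ℝ := max R 0 with hM
  have hR' : tsupport G ⊆ Metric.closedBall 0 M :=
    hR.trans (Metric.closedBall_subset_closedBall (le_max_left _ _))
  have hM0 : 0 ≤ M := le_max_right _ _
  set a : Fin (n+1) → ℝ := fun _ => -(M+1) with ha
  set b : Fin (n+1) → ℝ := fun _ => M+1 with hb
  have hle : a ≤ b := fun i => by simp only [ha, hb]; linarith
  have hsub : tsupport G ⊆ Set.pi univ fun i => Ioo (a i) (b i) := by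
    intro z hz
    have hzM : ‖z‖ ≤ M := by simpa using hR' hz
    intro i _
    have : |z i| ≤ M := by
      calc |z i| ≤ ‖z‖ := norm_le_pi_norm z i
      _ ≤ M := hzM
    rw [abs_le] at this
    constructor <;> simp only [ha, hb] <;> linarith [this.1, this.2]
  have hsubIcc : tsupport G ⊆ Icc a b := by
    rw [← Set.pi_univ_Icc]
    exact hsub.trans (Set.pi_mono fun i _ => Ioo_subset_Icc_self)
  have hdiv0 : ∀ y ∉ Icc a b, (∑ i, fderiv ℝ G y (Pi.single i 1) i) = 0 := by
    intro y hy
    have hyt : y ∉ tsupport G := fun h => hy (hsubIcc h)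
    have : fderiv ℝ G y = 0 := by
      by_contra h
      exact hyt (support_fderiv_subset ℝ (f := G) h)
    simp [this]
  have hdivcont : Continuous fun y => ∑ i, fderiv ℝ G y (Pi.single i 1) i := by
    have hcf := hG.continuous_fderiv one_ne_zero
    exact continuous_finset_sum _ fun i _ =>
      (continuous_apply i).comp
        ((ContinuousLinearMap.apply ℝ (Fin (n+1) → ℝ) (Pi.single i 1)).continuous.comp hcf)
  rw [← setIntegral_eq_integral_of_forall_compl_eq_zero hdiv0]
  rw [integral_divergence_of_hasFDerivAt_off_countable a b hle G (fun y => fderiv ℝ G y)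
    ∅ countable_empty (hG.continuous.continuousOn)
    (fun x _ => (hG.differentiable one_ne_zero x).hasFDerivAt)
    (hdivcont.continuousOn.integrableOn_compact isCompact_Icc)]
  refine Finset.sum_eq_zero fun i _ => ?_
  have hzero : ∀ (c : ℝ), c ∉ Ioo (a i) (b i) →
      ∀ (x : Fin n → ℝ), G (i.insertNth c x) i = 0 := by
    intro c hc x
    have hnot : (i.insertNth c x) ∉ tsupport G := by
      intro h
      exact hc (hsub h i (mem_univ i) |>.imp (fun h' => by simpa using h') (fun h' => by simpa using h'))
    simp [image_eq_zero_of_notMem_tsupport hnot]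
  rw [sub_eq_zero]
  have h1 : ∀ x, G (i.insertNth (b i) x) i = 0 :=
    hzero (b i) (fun h => (lt_irrefl _ h.2)) 
  have h2 : ∀ x, G (i.insertNth (a i) x) i = 0 :=
    hzero (a i) (fun h => (lt_irrefl _ h.1))
  simp [h1, h2]

lemma integrable_of_cont_supp {K : Set Ed} (hK : IsCompact K) {f : Ed → ℝ}
    (hf : Continuous f) (h0 : ∀ x ∉ K, f x = 0) : Integrable f :=
  hf.integrable_of_hasCompactSupport (HasCompactSupport.intro hK h0)

lemma div_free_integral (hd : 0 < d) {K : Set Ed} (hK : IsCompact K)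
    {g : Ed → ℝ} {A : Ed → Ed} (hg : ContDiff ℝ 1 g) (hA : ContDiff ℝ 1 A)
    (hdiv : ∀ x, ∑ i, fderiv ℝ A x (EuclideanSpace.single i 1) i = 0)
    (hg0 : ∀ x ∉ K, g x = 0) :
    ∫ x, fderiv ℝ g x (A x) = 0 := by
  have hGA : ContDiff ℝ 1 (fun y => g y • A y) := hg.smul hA
  have hGAsupp : HasCompactSupport (fun y => g y • A y) :=
    HasCompactSupport.intro hK (fun x hx => by rw [hg0 x hx, zero_smul])
  have h0 := integral_divergence_zero hd _ hGA hGAsupp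
  rw [← h0]
  refine integral_congr_ae (Filter.Eventually.of_forall fun x => ?_)
  exact (div_smul_apply (hg.differentiable one_ne_zero x) (hA.differentiable one_ne_zero x)
    (hdiv x)).symm

variable {F : Type*} [NormedAddCommGroup F] [NormedSpace ℝ F]

lemma hasFDerivAt_slice {f : Ed × ℝ → F} (hf : Differentiable ℝ f) (x : Ed) (t : ℝ) :
    HasFDerivAt (fun y => f (y, t))
      ((fderiv ℝ f (x, t)).comp (ContinuousLinearMap.inl ℝ Ed ℝ)) x :=
  (hf (x, t)).hasFDerivAt.comp x ((hasFDerivAt_id x).prodMk (hasFDerivAt_const t x))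

lemma fderiv_slice {f : Ed × ℝ → F} (hf : Differentiable ℝ f) (x : Ed) (t : ℝ) (z : Ed) :
    fderiv ℝ (fun y => f (y, t)) x z = fderiv ℝ f (x, t) (z, 0) := by
  rw [(hasFDerivAt_slice hf x t).fderiv]
  rfl

lemma differentiableAt_slice {f : Ed × ℝ → F} (hf : Differentiable ℝ f) (x : Ed) (t : ℝ) :
    DifferentiableAt ℝ (fun y => f (y, t)) x :=
  (hasFDerivAt_slice hf x t).differentiableAt

lemma hasDerivAt_time {f : Ed × ℝ → F} (hf : Differentiable ℝ f) (x : Ed) (t : ℝ) :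
    HasDerivAt (fun s => f (x, s)) (fderiv ℝ f (x, t) (0, 1)) t := by
  have h := (hf (x, t)).hasFDerivAt.comp_hasDerivAt t
    ((hasDerivAt_const t x).prodMk (hasDerivAt_id t))
  simpa [Function.comp_def] using h

lemma contDiff_slice {n : ℕ∞} {f : Ed × ℝ → F} (hf : ContDiff ℝ n f) (t : ℝ) :
    ContDiff ℝ n (fun y => f (y, t)) :=
  hf.comp (contDiff_id.prodMk contDiff_const)

lemma key_integral (hd : 0 < d) {K : Set Ed} (hK : IsCompact K)
    {q : Ed × ℝ → ℝ} (hq : ContDiff ℝ 1 q) {A : Ed → Ed} (hA : ContDiff ℝ 1 A)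
    (hdiv : ∀ x, ∑ i, fderiv ℝ A x (EuclideanSpace.single i 1) i = 0)
    (t : ℝ) (hq0 : ∀ y ∉ K, q (y, t) = 0) :
    Integrable (fun x => fderiv ℝ (fun y => q (y, t)) x (A x)) ∧
      ∫ x, fderiv ℝ (fun y => q (y, t)) x (A x) = 0 := by
  have hqs : ContDiff ℝ 1 (fun y => q (y, t)) := contDiff_slice hq t
  constructor
  · refine integrable_of_cont_supp hK ?_ ?_
    · have heq : (fun x => fderiv ℝ (fun y => q (y, t)) x (A x))
          = fun x => fderiv ℝ q (x, t) (A x, 0) := by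
        funext x; exact fderiv_slice (hq.differentiable one_ne_zero) x t (A x)
      rw [heq]
      exact ((hq.continuous_fderiv one_ne_zero).comp
        (continuous_id.prodMk continuous_const)).clm_apply
        ((hA.continuous).prodMk continuous_const)
    · intro x hx
      have h0 : fderiv ℝ (fun y => q (y, t)) x = 0 := by
        have hev : (fun y => q (y, t)) =ᶠ[nhds x] (fun _ => (0:ℝ)) :=
          Filter.eventuallyEq_of_mem (hK.isClosed.isOpen_compl.mem_nhds hx)
            (fun y hy => hq0 y hy)
        rw [hev.fderiv_eq, fderiv_fun_const]
        rfl
      rw [h0]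
      rfl
  · exact div_free_integral hd hK hqs hA hdiv hq0

end helpers


end helpers2

/-- Energy stability of the coupled dememorized system with convection for the
permeability `κ = κ₁₁ ã ⊗ ã`: the energy
`‖u(t)‖²_{L²} + ‖κ₁₁^{1/2}(ã·∇v)(t)‖²_{L²}` at time `T` is bounded by its value
at time `0`, provided `βκ₁₁ + ã·∇κ₁₁ ≥ 0` and the velocity fields are
divergence-free. -/
theorem dememorized_convection_energy_stability
    (d : ℕ) (hd : 0 < d) (T : ℝ) (hT : 0 < T)
    (a' a : EuclideanSpace ℝ (Fin d) → EuclideanSpace ℝ (Fin d))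
    (ha' : ContDiff ℝ 1 a') (ha : ContDiff ℝ 1 a)
    (hdiva' : ∀ x, ∑ i, fderiv ℝ a' x (EuclideanSpace.single i 1) i = 0)
    (hdiva : ∀ x, ∑ i, fderiv ℝ a x (EuclideanSpace.single i 1) i = 0)
    (κ : EuclideanSpace ℝ (Fin d) → ℝ)
    (hκ : ContDiff ℝ 1 κ) (hκ0 : ∀ x, 0 ≤ κ x)
    (β : ℝ) (hβ : 0 ≤ β)
    (hcond : ∀ x, 0 ≤ β * κ x + ⟪a' x, gradient κ x⟫)
    (u v : EuclideanSpace ℝ (Fin d) → ℝ → ℝ)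
    (hu : ContDiff ℝ 2 (fun p : EuclideanSpace ℝ (Fin d) × ℝ => u p.1 p.2))
    (hv : ContDiff ℝ 2 (fun p : EuclideanSpace ℝ (Fin d) × ℝ => v p.1 p.2))
    (K : Set (EuclideanSpace ℝ (Fin d))) (hK : IsCompact K)
    (hsupp : ∀ t ∈ Set.Icc (0 : ℝ) T, ∀ x ∉ K, u x t = 0 ∧ v x t = 0)
    (heq1 : ∀ x, ∀ t ∈ Set.Icc (0 : ℝ) T,
      deriv (v x) t - ⟪a' x, gradient (fun y => v y t) x⟫ + β * v x t = u x t)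
    (heq2 : ∀ x, ∀ t ∈ Set.Icc (0 : ℝ) T,
      deriv (u x) t + ⟪a x, gradient (fun y => u y t) x⟫
        = ∑ i, fderiv ℝ
            (fun y => (κ y * ⟪a' y, gradient (fun z => v z t) y⟫) • a' y) x
            (EuclideanSpace.single i 1) i) :
    (∫ x, (u x T) ^ 2) + ∫ x, κ x * ⟪a' x, gradient (fun y => v y T) x⟫ ^ 2
      ≤ (∫ x, (u x 0) ^ 2) + ∫ x, κ x * ⟪a' x, gradient (fun y => v y 0) x⟫ ^ 2 := by
  have inner_grad : ∀ (f : EuclideanSpace ℝ (Fin d) → ℝ) (x y : EuclideanSpace ℝ (Fin d)),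
      ⟪y, gradient f x⟫ = fderiv ℝ f x y := fun f x y => by
    rw [real_inner_comm, gradient, InnerProductSpace.toDual_symm_apply]
  simp only [inner_grad] at hcond heq1 heq2 ⊢
  -- basic smoothness data
  set Vu : EuclideanSpace ℝ (Fin d) × ℝ → ℝ := fun p => v p.1 p.2 with hVudef
  set Uu : EuclideanSpace ℝ (Fin d) × ℝ → ℝ := fun p => u p.1 p.2 with hUudef
  have hdVu : Differentiable ℝ Vu := hv.differentiable (by norm_num)
  have hdUu : Differentiable ℝ Uu := hu.differentiable (by norm_num)
  have hfdVu : ContDiff ℝ 1 (fderiv ℝ Vu) := hv.fderiv_right (by norm_num)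
  have hfdUu : ContDiff ℝ 1 (fderiv ℝ Uu) := hu.fderiv_right (by norm_num)
  -- the function W = ã ⋅ ∇v
  set W : EuclideanSpace ℝ (Fin d) × ℝ → ℝ := fun p => fderiv ℝ Vu p (a' p.1, 0) with hWdef
  have hWc : ContDiff ℝ 1 W :=
    hfdVu.clm_apply ((ha'.comp contDiff_fst).prodMk contDiff_const)
  have hWeq : ∀ (x : EuclideanSpace ℝ (Fin d)) (t : ℝ),
      fderiv ℝ (fun y => v y t) x (a' x) = W (x, t) := fun x t =>
    fderiv_slice hdVu x t (a' x)
  simp only [hWeq] at heq1 heq2 ⊢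
  -- time derivatives
  set du : EuclideanSpace ℝ (Fin d) × ℝ → ℝ := fun p => fderiv ℝ Uu p (0, 1) with hdudef
  have hderu : ∀ x t, HasDerivAt (u x) (du (x, t)) t := fun x t => hasDerivAt_time hdUu x t
  set dtv : EuclideanSpace ℝ (Fin d) × ℝ → ℝ := fun p => fderiv ℝ Vu p (0, 1) with hdtvdef
  have hdtvc : ContDiff ℝ 1 dtv := hfdVu.clm_apply contDiff_const
  have hderv : ∀ x t, HasDerivAt (v x) (dtv (x, t)) t := fun x t => hasDerivAt_time hdVu x t
  set dtW : EuclideanSpace ℝ (Fin d) × ℝ → ℝ := fun p => fderiv ℝ dtv p (a' p.1, 0) with hdtWdef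
  have hdtWcont : Continuous dtW :=
    ((hdtvc.continuous_fderiv one_ne_zero).clm_apply
      (((ha'.continuous.comp continuous_fst)).prodMk continuous_const))
  -- time derivative of W via symmetry of second derivatives
  have hWt : ∀ x t, HasDerivAt (fun s => W (x, s)) (dtW (x, t)) t := by
    intro x t
    have h1 : HasDerivAt (fun s => fderiv ℝ Vu (x, s))
        (fderiv ℝ (fderiv ℝ Vu) (x, t) (0, 1)) t :=
      hasDerivAt_time (hfdVu.differentiable one_ne_zero) x t
    have h2 := h1.clm_apply (hasDerivAt_const t ((a' x, (0 : ℝ)) :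
      EuclideanSpace ℝ (Fin d) × ℝ))
    have hsym := second_derivative_symmetric (f := Vu) (f' := fderiv ℝ Vu)
      (fun y => (hdVu y).hasFDerivAt)
      ((hfdVu.differentiable one_ne_zero (x, t)).hasFDerivAt)
      ((0 : EuclideanSpace ℝ (Fin d)), (1 : ℝ)) (a' x, 0)
    have h3 : fderiv ℝ dtv (x, t) (a' x, 0)
        = fderiv ℝ (fderiv ℝ Vu) (x, t) (a' x, 0) (0, 1) := by
      have h4 := ((hfdVu.differentiable one_ne_zero (x, t)).hasFDerivAt.clm_apply
        (hasFDerivAt_const (((0 : EuclideanSpace ℝ (Fin d)), (1 : ℝ))) (x, t))).fderiv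
      rw [hdtvdef]
      rw [h4]
      simp
    have : dtW (x, t) = fderiv ℝ (fderiv ℝ Vu) (x, t) (0, 1) (a' x, 0) := by
      rw [hdtWdef]; dsimp only; rw [h3, hsym]
    rw [this]
    simpa using h2
  -- spatial support lemmas
  have hopen : IsOpen Kᶜ := hK.isClosed.isOpen_compl
  have hfd0 : ∀ (f : EuclideanSpace ℝ (Fin d) → ℝ), (∀ y ∉ K, f y = 0) →
      ∀ x ∉ K, fderiv ℝ f x = 0 := by
    intro f hf x hx
    have hev : f =ᶠ[nhds x] (fun _ => (0 : ℝ)) :=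
      Filter.eventuallyEq_of_mem (hopen.mem_nhds hx) (fun y hy => hf y hy)
    rw [hev.fderiv_eq, fderiv_fun_const]
    rfl
  have hu0 : ∀ t ∈ Set.Icc (0:ℝ) T, ∀ x ∉ K, u x t = 0 :=
    fun t ht x hx => (hsupp t ht x hx).1
  have hv0 : ∀ t ∈ Set.Icc (0:ℝ) T, ∀ x ∉ K, v x t = 0 :=
    fun t ht x hx => (hsupp t ht x hx).2
  have hW0 : ∀ t ∈ Set.Icc (0:ℝ) T, ∀ x ∉ K, W (x, t) = 0 := by
    intro t ht x hx
    rw [← hWeq x t, hfd0 (fun y => v y t) (hv0 t ht) x hx]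
    rfl
  -- slice differentiability
  have hus : ∀ t, ContDiff ℝ 2 (fun y => u y t) := fun t => contDiff_slice hu t
  have hvs : ∀ t, ContDiff ℝ 2 (fun y => v y t) := fun t => contDiff_slice hv t
  have hWs : ∀ t, ContDiff ℝ 1 (fun y => W (y, t)) := fun t => contDiff_slice hWc t
  have husd : ∀ t x, DifferentiableAt ℝ (fun y => u y t) x :=
    fun t x => ((hus t).differentiable (by norm_num)) x
  have hvsd : ∀ t x, DifferentiableAt ℝ (fun y => v y t) x :=
    fun t x => ((hvs t).differentiable (by norm_num)) x
  have hWsd : ∀ t x, DifferentiableAt ℝ (fun y => W (y, t)) x :=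
    fun t x => ((hWs t).differentiable one_ne_zero) x
  have hκd : ∀ x, DifferentiableAt ℝ κ x := fun x => (hκ.differentiable one_ne_zero) x
  -- expansion of du on [0, T] from the second equation
  have hdu_icc : ∀ t ∈ Set.Icc (0:ℝ) T, ∀ x, du (x, t)
      = -(fderiv ℝ (fun y => u y t) x (a x))
        + fderiv ℝ (fun y => κ y * W (y, t)) x (a' x) := by
    intro t ht x
    have h2 := heq2 x t ht
    have hgd : DifferentiableAt ℝ (fun y => κ y * W (y, t)) x :=
      (hκd x).mul (hWsd t x)
    rw [div_smul_apply hgd ((ha'.differentiable one_ne_zero) x) (hdiva' x)] at h2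
    have hdu : deriv (u x) t = du (x, t) := (hderu x t).deriv
    rw [hdu] at h2
    linarith
  -- expansion of dtW on [0, T] from the first equation
  have hdtW_icc : ∀ t ∈ Set.Icc (0:ℝ) T, ∀ x, dtW (x, t)
      = fderiv ℝ (fun y => u y t) x (a' x)
        + fderiv ℝ (fun y => W (y, t)) x (a' x) - β * W (x, t) := by
    intro t ht x
    have hfun : (fun y => dtv (y, t)) = (fun y => u y t + W (y, t) - β * v y t) := by
      funext y
      have h1 := heq1 y t ht
      have : deriv (v y) t = dtv (y, t) := (hderv y t).deriv
      linarith [h1, this]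
    have hslice : dtW (x, t) = fderiv ℝ (fun y => dtv (y, t)) x (a' x) := by
      rw [hdtWdef]; dsimp only
      rw [fderiv_slice (hdtvc.differentiable one_ne_zero) x t (a' x)]
    rw [hslice, hfun]
    rw [fderiv_fun_sub (f := fun y => u y t + W (y, t)) (g := fun y => β * v y t) ((husd t x).add (hWsd t x)) ((differentiableAt_const β).mul (hvsd t x))]
    rw [fderiv_fun_add (f := fun y => u y t) (g := fun y => W (y, t)) (husd t x) (hWsd t x)]
    rw [fderiv_const_mul (hvsd t x) β]
    simp only [ContinuousLinearMap.sub_apply, ContinuousLinearMap.add_apply,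
      ContinuousLinearMap.coe_smul', Pi.smul_apply, smul_eq_mul]
    rw [hWeq x t]
  -- continuity of basic integrand ingredients
  have hu1 : ContDiff ℝ 1 Uu := hu.of_le (by norm_num)
  have hcont_du : Continuous du :=
    (hfdUu.continuous).clm_apply continuous_const
  have hcont_u : Continuous Uu := hu.continuous
  have hcont_W : Continuous W := hWc.continuous
  have hcont_κ : Continuous κ := hκ.continuous
  have hcont_Dκ : Continuous (fun x => fderiv ℝ κ x (a' x)) :=
    (hκ.continuous_fderiv one_ne_zero).clm_apply ha'.continuous
  -- joint C¹ functions for the divergence identities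
  have hq1c : ContDiff ℝ 1 (fun p : EuclideanSpace ℝ (Fin d) × ℝ => Uu p * Uu p) :=
    hu1.mul hu1
  have hq2c : ContDiff ℝ 1
      (fun p : EuclideanSpace ℝ (Fin d) × ℝ => 2 * Uu p * (κ p.1 * W p)) :=
    (contDiff_const.mul hu1).mul ((hκ.comp contDiff_fst).mul hWc)
  have hq3c : ContDiff ℝ 1
      (fun p : EuclideanSpace ℝ (Fin d) × ℝ => κ p.1 * (W p * W p)) :=
    (hκ.comp contDiff_fst).mul (hWc.mul hWc)
  -- the main inequality for the derivative of the energy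
  have hP : ∀ t ∈ Set.Icc (0:ℝ) T,
      (∫ x, 2 * u x t * du (x, t)) + (∫ x, κ x * (2 * W (x, t) * dtW (x, t))) ≤ 0 := by
    intro t ht
    obtain ⟨hint1, hzero1⟩ := key_integral hd hK hq1c ha hdiva t
      (fun y hy => by simp only [hUudef]; rw [hu0 t ht y hy, zero_mul])
    obtain ⟨hint2, hzero2⟩ := key_integral hd hK hq2c ha' hdiva' t
      (fun y hy => by simp only [hUudef]; rw [hu0 t ht y hy]; ring)
    obtain ⟨hint3, hzero3⟩ := key_integral hd hK hq3c ha' hdiva' t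
      (fun y hy => by rw [hW0 t ht y hy]; ring)
    replace hint2 : Integrable
        (fun x => fderiv ℝ (fun y => 2 * Uu (y, t) * (κ y * W (y, t))) x (a' x)) := hint2
    replace hzero2 :
        ∫ x, fderiv ℝ (fun y => 2 * Uu (y, t) * (κ y * W (y, t))) x (a' x) = 0 := hzero2
    replace hint3 : Integrable
        (fun x => fderiv ℝ (fun y => κ y * (W (y, t) * W (y, t))) x (a' x)) := hint3
    replace hzero3 :
        ∫ x, fderiv ℝ (fun y => κ y * (W (y, t) * W (y, t))) x (a' x) = 0 := hzero3
    set f4 : EuclideanSpace ℝ (Fin d) → ℝ :=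
      fun x => (W (x, t) * W (x, t)) * (fderiv ℝ κ x (a' x) + 2 * β * κ x) with hf4def
    have hf4cont : Continuous f4 := by
      apply Continuous.mul
      · exact ((hcont_W.comp (continuous_id.prodMk continuous_const)).mul
          (hcont_W.comp (continuous_id.prodMk continuous_const)))
      · exact hcont_Dκ.add (continuous_const.mul hcont_κ)
    have hint4 : Integrable f4 := integrable_of_cont_supp hK hf4cont
      (fun x hx => by rw [hf4def]; simp only; rw [hW0 t ht x hx]; ring)
    have hf4nonneg : ∀ x, 0 ≤ f4 x := by
      intro x
      apply mul_nonneg (mul_self_nonneg _)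
      have h1 := hcond x
      have h2 : 0 ≤ β * κ x := mul_nonneg hβ (hκ0 x)
      linarith
    -- pointwise identity
    have hptwise : ∀ x, 2 * u x t * du (x, t) + κ x * (2 * W (x, t) * dtW (x, t))
        = -(fderiv ℝ (fun y => Uu (y, t) * Uu (y, t)) x (a x))
          + fderiv ℝ (fun y => 2 * Uu (y, t) * (κ y * W (y, t))) x (a' x)
          + fderiv ℝ (fun y => κ y * (W (y, t) * W (y, t))) x (a' x)
          - f4 x := by
      intro x
      have e1 : fderiv ℝ (fun y => Uu (y, t) * Uu (y, t)) x
          = u x t • fderiv ℝ (fun y => u y t) x + u x t • fderiv ℝ (fun y => u y t) x :=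
        fderiv_mul (husd t x) (husd t x)
      have hκW : DifferentiableAt ℝ (fun y => κ y * W (y, t)) x := (hκd x).mul (hWsd t x)
      have h2u : DifferentiableAt ℝ (fun y => 2 * Uu (y, t)) x :=
        (differentiableAt_const 2).mul (husd t x)
      have e2 : fderiv ℝ (fun y => 2 * Uu (y, t) * (κ y * W (y, t))) x
          = (2 * u x t) • fderiv ℝ (fun y => κ y * W (y, t)) x
            + (κ x * W (x, t)) • fderiv ℝ (fun y => 2 * Uu (y, t)) x :=
        fderiv_mul h2u hκW
      have e2' : fderiv ℝ (fun y => 2 * Uu (y, t)) x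
          = (2:ℝ) • fderiv ℝ (fun y => u y t) x := fderiv_const_mul (husd t x) 2
      have hWW : DifferentiableAt ℝ (fun y => W (y, t) * W (y, t)) x :=
        (hWsd t x).mul (hWsd t x)
      have e3 : fderiv ℝ (fun y => κ y * (W (y, t) * W (y, t))) x
          = κ x • fderiv ℝ (fun y => W (y, t) * W (y, t)) x
            + (W (x, t) * W (x, t)) • fderiv ℝ κ x :=
        fderiv_mul (hκd x) hWW
      have e3' : fderiv ℝ (fun y => W (y, t) * W (y, t)) x
          = W (x, t) • fderiv ℝ (fun y => W (y, t)) x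
            + W (x, t) • fderiv ℝ (fun y => W (y, t)) x :=
        fderiv_mul (hWsd t x) (hWsd t x)
      rw [hdu_icc t ht x, hdtW_icc t ht x, e1, e2, e2', e3, e3']
      simp only [ContinuousLinearMap.add_apply, ContinuousLinearMap.coe_smul',
        Pi.smul_apply, smul_eq_mul, hf4def]
      ring
    have hcombine : (∫ x, 2 * u x t * du (x, t)) + (∫ x, κ x * (2 * W (x, t) * dtW (x, t)))
        = ∫ x, (2 * u x t * du (x, t) + κ x * (2 * W (x, t) * dtW (x, t))) := by
      rw [← integral_add]
      · exact integrable_of_cont_supp hK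
          ((continuous_const.mul (hcont_u.comp (continuous_id.prodMk continuous_const))).mul
            (hcont_du.comp (continuous_id.prodMk continuous_const)))
          (fun x hx => by rw [hu0 t ht x hx]; ring)
      · exact integrable_of_cont_supp hK
          (hcont_κ.mul ((continuous_const.mul
            (hcont_W.comp (continuous_id.prodMk continuous_const))).mul
            (hdtWcont.comp (continuous_id.prodMk continuous_const))))
          (fun x hx => by rw [hW0 t ht x hx]; ring)
    rw [hcombine]
    have hint1n : Integrable (fun x => -(fderiv ℝ (fun y => Uu (y, t) * Uu (y, t)) x (a x))) :=
      hint1.neg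
    have hint12 : Integrable (fun x => -(fderiv ℝ (fun y => Uu (y, t) * Uu (y, t)) x (a x))
        + fderiv ℝ (fun y => 2 * Uu (y, t) * (κ y * W (y, t))) x (a' x)) := hint1n.add hint2
    have hint123 : Integrable (fun x => -(fderiv ℝ (fun y => Uu (y, t) * Uu (y, t)) x (a x))
        + fderiv ℝ (fun y => 2 * Uu (y, t) * (κ y * W (y, t))) x (a' x)
        + fderiv ℝ (fun y => κ y * (W (y, t) * W (y, t))) x (a' x)) := hint12.add hint3
    have s0 : ∫ x, (2 * u x t * du (x, t) + κ x * (2 * W (x, t) * dtW (x, t)))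
        = ∫ x, (-(fderiv ℝ (fun y => Uu (y, t) * Uu (y, t)) x (a x))
            + fderiv ℝ (fun y => 2 * Uu (y, t) * (κ y * W (y, t))) x (a' x)
            + fderiv ℝ (fun y => κ y * (W (y, t) * W (y, t))) x (a' x)
            - f4 x) :=
      integral_congr_ae (Filter.Eventually.of_forall fun x => hptwise x)
    have s3 : ∫ x, (-(fderiv ℝ (fun y => Uu (y, t) * Uu (y, t)) x (a x))
            + fderiv ℝ (fun y => 2 * Uu (y, t) * (κ y * W (y, t))) x (a' x)
            + fderiv ℝ (fun y => κ y * (W (y, t) * W (y, t))) x (a' x)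
            - f4 x)
        = (∫ x, (-(fderiv ℝ (fun y => Uu (y, t) * Uu (y, t)) x (a x))
            + fderiv ℝ (fun y => 2 * Uu (y, t) * (κ y * W (y, t))) x (a' x)
            + fderiv ℝ (fun y => κ y * (W (y, t) * W (y, t))) x (a' x)))
            - ∫ x, f4 x := integral_sub hint123 hint4
    have s4 : ∫ x, (-(fderiv ℝ (fun y => Uu (y, t) * Uu (y, t)) x (a x))
            + fderiv ℝ (fun y => 2 * Uu (y, t) * (κ y * W (y, t))) x (a' x)
            + fderiv ℝ (fun y => κ y * (W (y, t) * W (y, t))) x (a' x))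
        = (∫ x, (-(fderiv ℝ (fun y => Uu (y, t) * Uu (y, t)) x (a x))
            + fderiv ℝ (fun y => 2 * Uu (y, t) * (κ y * W (y, t))) x (a' x)))
            + ∫ x, fderiv ℝ (fun y => κ y * (W (y, t) * W (y, t))) x (a' x) :=
      integral_add hint12 hint3
    have s5 : ∫ x, (-(fderiv ℝ (fun y => Uu (y, t) * Uu (y, t)) x (a x))
            + fderiv ℝ (fun y => 2 * Uu (y, t) * (κ y * W (y, t))) x (a' x))
        = (∫ x, -(fderiv ℝ (fun y => Uu (y, t) * Uu (y, t)) x (a x)))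
            + ∫ x, fderiv ℝ (fun y => 2 * Uu (y, t) * (κ y * W (y, t))) x (a' x) :=
      integral_add hint1n hint2
    have s6 : ∫ x, -(fderiv ℝ (fun y => Uu (y, t) * Uu (y, t)) x (a x))
        = -∫ x, fderiv ℝ (fun y => Uu (y, t) * Uu (y, t)) x (a x) := integral_neg _
    rw [s0, s3, s4, s5, s6, hzero1, hzero2, hzero3]
    have : 0 ≤ ∫ x, f4 x := integral_nonneg hf4nonneg
    linarith
  -- the energy function
  set φ : ℝ → ℝ := fun t => (∫ x, u x t ^ 2) + ∫ x, κ x * W (x, t) ^ 2 with hφdef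
  -- bound helper
  have hbint : ∀ C : ℝ, Integrable (K.indicator (fun _ => C)) := fun C => by
    rw [integrable_indicator_iff hK.measurableSet]
    exact integrableOn_const hK.measure_lt_top.ne
  have hbd : ∀ (f : EuclideanSpace ℝ (Fin d) × ℝ → ℝ) (C : ℝ),
      (∀ p ∈ K ×ˢ Set.Icc (0:ℝ) T, ‖f p‖ ≤ C) →
      (∀ s ∈ Set.Icc (0:ℝ) T, ∀ x ∉ K, f (x, s) = 0) →
      ∀ (x : EuclideanSpace ℝ (Fin d)), ∀ s ∈ Set.Icc (0:ℝ) T,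
        ‖f (x, s)‖ ≤ K.indicator (fun _ => C) x := by
    intro f C hC hz x s hs
    by_cases hx : x ∈ K
    · rw [Set.indicator_of_mem hx]
      exact hC (x, s) (Set.mk_mem_prod hx hs)
    · rw [Set.indicator_of_notMem hx, hz s hs x hx, norm_zero]
  -- the four relevant jointly continuous integrand families
  have hcontF1 : Continuous (fun p : EuclideanSpace ℝ (Fin d) × ℝ => Uu p ^ 2) :=
    hcont_u.pow 2
  have hcontF2 : Continuous (fun p : EuclideanSpace ℝ (Fin d) × ℝ => κ p.1 * W p ^ 2) :=
    (hcont_κ.comp continuous_fst).mul (hcont_W.pow 2)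
  have hcontF1' : Continuous (fun p : EuclideanSpace ℝ (Fin d) × ℝ => 2 * Uu p * du p) :=
    (continuous_const.mul hcont_u).mul hcont_du
  have hcontF2' : Continuous
      (fun p : EuclideanSpace ℝ (Fin d) × ℝ => κ p.1 * (2 * W p * dtW p)) :=
    (hcont_κ.comp continuous_fst).mul ((continuous_const.mul hcont_W).mul hdtWcont)
  obtain ⟨C1, hC1⟩ := (hK.prod isCompact_Icc).exists_bound_of_continuousOn
    hcontF1.continuousOn
  obtain ⟨C2, hC2⟩ := (hK.prod isCompact_Icc).exists_bound_of_continuousOn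
    hcontF2.continuousOn
  obtain ⟨C1', hC1'⟩ := (hK.prod isCompact_Icc).exists_bound_of_continuousOn
    hcontF1'.continuousOn
  obtain ⟨C2', hC2'⟩ := (hK.prod isCompact_Icc).exists_bound_of_continuousOn
    hcontF2'.continuousOn
  -- vanishing outside K
  have hz1 : ∀ s ∈ Set.Icc (0:ℝ) T, ∀ x ∉ K, Uu (x, s) ^ 2 = 0 :=
    fun s hs x hx => by simp only [hUudef]; rw [hu0 s hs x hx]; ring
  have hz2 : ∀ s ∈ Set.Icc (0:ℝ) T, ∀ x ∉ K, κ x * W (x, s) ^ 2 = 0 :=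
    fun s hs x hx => by rw [hW0 s hs x hx]; ring
  have hz1' : ∀ s ∈ Set.Icc (0:ℝ) T, ∀ x ∉ K, 2 * Uu (x, s) * du (x, s) = 0 :=
    fun s hs x hx => by simp only [hUudef]; rw [hu0 s hs x hx]; ring
  have hz2' : ∀ s ∈ Set.Icc (0:ℝ) T, ∀ x ∉ K, κ x * (2 * W (x, s) * dtW (x, s)) = 0 :=
    fun s hs x hx => by rw [hW0 s hs x hx]; ring
  -- derivative of φ on the interior
  have hφder : ∀ t ∈ Set.Ioo (0:ℝ) T, HasDerivAt φ
      ((∫ x, 2 * u x t * du (x, t)) + ∫ x, κ x * (2 * W (x, t) * dtW (x, t))) t := by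
    intro t ht
    have htIcc : t ∈ Set.Icc (0:ℝ) T := ⟨ht.1.le, ht.2.le⟩
    have hε : 0 < min t (T - t) := lt_min ht.1 (by linarith [ht.2])
    have hball : Metric.ball t (min t (T - t)) ⊆ Set.Icc (0:ℝ) T := by
      intro s hsb
      rw [Real.ball_eq_Ioo] at hsb
      constructor
      · have := hsb.1
        have h1 : min t (T - t) ≤ t := min_le_left _ _
        linarith
      · have := hsb.2
        have h1 : min t (T - t) ≤ T - t := min_le_right _ _
        linarith
    have h1 : HasDerivAt (fun s => ∫ x, u x s ^ 2)
        (∫ x, 2 * u x t * du (x, t)) t := by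
      refine (hasDerivAt_integral_of_dominated_loc_of_deriv_le (Metric.ball_mem_nhds t hε)
        (F := fun s x => u x s ^ 2) (F' := fun s x => 2 * u x s * du (x, s))
        (bound := K.indicator (fun _ => C1'))
        (Filter.Eventually.of_forall fun s =>
          ((hcont_u.comp (continuous_id.prodMk continuous_const)).pow 2).aestronglyMeasurable)
        ?_ ?_ ?_ (hbint C1') ?_).2
      · exact integrable_of_cont_supp hK
          ((hcont_u.comp (continuous_id.prodMk continuous_const)).pow 2)
          (fun x hx => hz1 t htIcc x hx)
      · exact (((continuous_const.mul
          (hcont_u.comp (continuous_id.prodMk continuous_const))).mul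
          (hcont_du.comp (continuous_id.prodMk continuous_const)))).aestronglyMeasurable
      · exact Filter.Eventually.of_forall fun x s hsb =>
          hbd _ C1' hC1' hz1' x s (hball hsb)
      · refine Filter.Eventually.of_forall fun x s hsb => ?_
        have := (hderu x s).fun_pow 2
        simpa using this
    have h2 : HasDerivAt (fun s => ∫ x, κ x * W (x, s) ^ 2)
        (∫ x, κ x * (2 * W (x, t) * dtW (x, t))) t := by
      refine (hasDerivAt_integral_of_dominated_loc_of_deriv_le (Metric.ball_mem_nhds t hε)
        (F := fun s x => κ x * W (x, s) ^ 2)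
        (F' := fun s x => κ x * (2 * W (x, s) * dtW (x, s)))
        (bound := K.indicator (fun _ => C2'))
        (Filter.Eventually.of_forall fun s =>
          (hcont_κ.mul ((hcont_W.comp (continuous_id.prodMk continuous_const)).pow 2)).aestronglyMeasurable)
        ?_ ?_ ?_ (hbint C2') ?_).2
      · exact integrable_of_cont_supp hK
          (hcont_κ.mul ((hcont_W.comp (continuous_id.prodMk continuous_const)).pow 2))
          (fun x hx => hz2 t htIcc x hx)
      · exact (hcont_κ.mul ((continuous_const.mul
          (hcont_W.comp (continuous_id.prodMk continuous_const))).mul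
          (hdtWcont.comp (continuous_id.prodMk continuous_const)))).aestronglyMeasurable
      · exact Filter.Eventually.of_forall fun x s hsb =>
          hbd _ C2' hC2' hz2' x s (hball hsb)
      · refine Filter.Eventually.of_forall fun x s hsb => ?_
        have := ((hWt x s).fun_pow 2).const_mul (κ x)
        simpa [mul_assoc] using this
    exact h1.add h2
  -- continuity of φ on [0, T]
  have hφcont : ContinuousOn φ (Set.Icc (0:ℝ) T) := by
    intro t ht
    have c1 : ContinuousWithinAt (fun s => ∫ x, u x s ^ 2) (Set.Icc (0:ℝ) T) t := by
      refine continuousWithinAt_of_dominated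
        (bound := K.indicator (fun _ => C1))
        (Filter.Eventually.of_forall fun s =>
          ((hcont_u.comp (continuous_id.prodMk continuous_const)).pow 2).aestronglyMeasurable)
        ?_ (hbint C1) ?_
      · exact eventually_mem_nhdsWithin.mono fun s hs =>
          Filter.Eventually.of_forall fun x => hbd _ C1 hC1 hz1 x s hs
      · exact Filter.Eventually.of_forall fun x =>
          (((hcont_u.comp (continuous_const.prodMk continuous_id)).pow 2)).continuousWithinAt
    have c2 : ContinuousWithinAt (fun s => ∫ x, κ x * W (x, s) ^ 2) (Set.Icc (0:ℝ) T) t := by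
      refine continuousWithinAt_of_dominated
        (bound := K.indicator (fun _ => C2))
        (Filter.Eventually.of_forall fun s =>
          (hcont_κ.mul ((hcont_W.comp (continuous_id.prodMk continuous_const)).pow 2)).aestronglyMeasurable)
        ?_ (hbint C2) ?_
      · exact eventually_mem_nhdsWithin.mono fun s hs =>
          Filter.Eventually.of_forall fun x => hbd _ C2 hC2 hz2 x s hs
      · exact Filter.Eventually.of_forall fun x =>
          ((continuous_const.mul
            ((hcont_W.comp (continuous_const.prodMk continuous_id)).pow 2))).continuousWithinAt
    exact c1.add c2
  -- conclude by monotonicity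
  have hanti : AntitoneOn φ (Set.Icc (0:ℝ) T) := by
    refine antitoneOn_of_deriv_nonpos (convex_Icc 0 T) hφcont ?_ ?_
    · intro t ht
      rw [interior_Icc] at ht
      exact (hφder t ht).differentiableAt.differentiableWithinAt
    · intro t ht
      rw [interior_Icc] at ht
      rw [(hφder t ht).deriv]
      exact hP t ⟨ht.1.le, ht.2.le⟩
  exact hanti (Set.left_mem_Icc.2 hT.le) (Set.right_mem_Icc.2 hT.le) hT.le
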